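/- Let (k_i)_{i≥1} be a sequence of positive integers satisfying condition (★). Then the subshift X contains no periodic point: there is no x ∈ X and no integer p ≥ 1 with σ^p(x) = x. -/

import Mathlib

open Filter Topology MeasureTheory

def chiSub (k : ℕ) : Fin 3 → List (Fin 3) :=
  ![[1], 2 :: List.replicate k 0, 2 :: List.replicate (k - 1) 0]

def applyChi (k : ℕ) (w : List (Fin 3)) : List (Fin 3) := w.flatMap (chiSub k)

def compApply (k : ℕ → ℕ) : ℕ → List (Fin 3) → List (Fin 3)
  | 0, w => w
  | n + 1, w => compApply k n (applyChi (k (n + 1)) w)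

def StarCond (k : ℕ → ℕ) : Prop :=
  (∀ N, ∃ i ≥ N, 1 < k (2 * i)) ∧ (∀ N, ∃ i ≥ N, 1 < k (2 * i - 1))

def IsPrefixSeq (w : List (Fin 3)) (x : ℕ → Fin 3) : Prop :=
  w = List.ofFn fun i : Fin w.length => x i

def shift (x : ℕ → Fin 3) : ℕ → Fin 3 := fun i => x (i + 1)

def orbitClosure (ρ : ℕ → Fin 3) : Set (ℕ → Fin 3) :=
  closure {y | ∃ n : ℕ, y = fun i => ρ (i + n)}

/-! ### auxiliary development -/

namespace Aperiodic

/-- length of the image of a letter -/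
def blen (K : ℕ) (a : Fin 3) : ℕ := (chiSub K a).length

lemma blen0 (K : ℕ) : blen K 0 = 1 := by simp [blen, chiSub]
lemma blen1 (K : ℕ) : blen K 1 = K + 1 := by simp [blen, chiSub]
lemma blen2 (K : ℕ) (hK : 1 ≤ K) : blen K 2 = K := by
  simp [blen, chiSub]; omega

lemma blen_pos (K : ℕ) (hK : 1 ≤ K) (a : Fin 3) : 1 ≤ blen K a := by
  fin_cases a <;> simp [blen0, blen1, blen2 K hK] <;> omega

lemma blen_le (K : ℕ) (a : Fin 3) : blen K a ≤ K + 1 := by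
  fin_cases a <;> simp [blen, chiSub] <;> omega

lemma blen_eq_one {K : ℕ} (hK2 : 2 ≤ K) {a : Fin 3} (h : blen K a = 1) : a = 0 := by
  fin_cases a <;> simp_all [blen0, blen1, blen2 K (by omega)] <;> omega

lemma chiSub_getD_zero (K : ℕ) (a : Fin 3) : (chiSub K a).getD 0 0 ≠ 0 := by
  fin_cases a <;> simp [chiSub]

lemma replicate_getD (n m : ℕ) : (List.replicate n (0:Fin 3)).getD m 0 = 0 := by
  rcases lt_or_ge m n with h|h
  · rw [List.getD_eq_getElem _ _ (by simpa using h)]; simp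
  · rw [List.getD_eq_default _ _ (by simpa using h)]

lemma chiSub_getD_pos (K : ℕ) (a : Fin 3) (t : ℕ) (h1 : 1 ≤ t) (h2 : t < blen K a) :
    (chiSub K a).getD t 0 = 0 := by
  obtain ⟨t, rfl⟩ : ∃ u, t = u + 1 := ⟨t - 1, by omega⟩
  fin_cases a
  · simp [blen, chiSub] at h2
  · show ((2:Fin 3) :: List.replicate K 0).getD (t+1) 0 = 0
    rw [List.getD_cons_succ]; exact replicate_getD K t
  · show ((2:Fin 3) :: List.replicate (K-1) 0).getD (t+1) 0 = 0
    rw [List.getD_cons_succ]; exact replicate_getD (K-1) t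

lemma recover_letter (K : ℕ) (hK : 1 ≤ K) (a b : Fin 3)
    (hh : (chiSub K a).getD 0 0 = (chiSub K b).getD 0 0) (hl : blen K a = blen K b) :
    a = b := by
  have c0 : ∀ c : Fin 3, (chiSub K c).getD 0 0 = if c = 0 then 1 else 2 := by
    intro c; fin_cases c <;> simp [chiSub]
  rw [c0, c0] at hh
  fin_cases a <;> fin_cases b <;>
    simp_all [blen0, blen1, blen2 K hK] <;> omega

/-- partial sums of block lengths : start of block `j` -/
def Sfun (K : ℕ) (y' : ℕ → Fin 3) : ℕ → ℕ
  | 0 => 0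
  | j + 1 => Sfun K y' j + blen K (y' j)

lemma Sfun_succ (K : ℕ) (y' : ℕ → Fin 3) (j : ℕ) :
    Sfun K y' (j + 1) = Sfun K y' j + blen K (y' j) := rfl

/-- `y` is the `χ_K`-image of `y'` -/
def Rel (K : ℕ) (y' y : ℕ → Fin 3) : Prop :=
  ∀ j t, t < blen K (y' j) → y (Sfun K y' j + t) = (chiSub K (y' j)).getD t 0

section Sfun
variable {K : ℕ} {y' : ℕ → Fin 3} (hK : 1 ≤ K)
include hK

lemma Sfun_add_le (j r : ℕ) : Sfun K y' j + r ≤ Sfun K y' (j + r) := by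
  induction r with
  | zero => simp
  | succ r ih =>
      have h1 := blen_pos K hK (y' (j + r))
      have h2 : Sfun K y' (j+r+1) = Sfun K y' (j+r) + blen K (y' (j+r)) := rfl
      show Sfun K y' j + (r+1) ≤ Sfun K y' (j+r+1)
      omega

lemma Sfun_mono (j r : ℕ) : Sfun K y' j ≤ Sfun K y' (j + r) := by
  have := Sfun_add_le (y' := y') hK j r; omega

lemma Sfun_strict {j j' : ℕ} (h : j < j') : Sfun K y' j < Sfun K y' j' := by
  have := Sfun_add_le (y' := y') hK j (j' - j)
  have hj : j + (j' - j) = j' := by omega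
  rw [hj] at this; omega

lemma Sfun_lt_imp {j j' : ℕ} (h : Sfun K y' j < Sfun K y' j') : j < j' := by
  by_contra hc
  push_neg at hc
  have h2 := Sfun_mono (y' := y') hK j' (j - j')
  have hj : j' + (j - j') = j := by omega
  rw [hj] at h2
  omega

lemma Sfun_gap_le (j r : ℕ) : Sfun K y' (j + r) ≤ Sfun K y' j + (K + 1) * r := by
  induction r with
  | zero => simp
  | succ r ih =>
      have h1 := blen_le K (y' (j + r))
      have h2 : Sfun K y' (j+r+1) = Sfun K y' (j+r) + blen K (y' (j+r)) := rfl
      have hm : (K+1) * (r+1) = (K+1)*r + (K+1) := by ring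
      show Sfun K y' (j+r+1) ≤ Sfun K y' j + (K+1)*(r+1)
      omega

lemma Sfun_le {j j' : ℕ} (h : j ≤ j') : Sfun K y' j ≤ Sfun K y' j' := by
  have := Sfun_mono (y' := y') hK j (j' - j)
  rw [show j + (j' - j) = j' by omega] at this
  exact this

/-- every position lies in a block -/
lemma exists_block (q : ℕ) : ∃ j, Sfun K y' j ≤ q ∧ q < Sfun K y' (j + 1) := by
  induction q with
  | zero =>
      refine ⟨0, le_refl _, ?_⟩
      exact Sfun_strict (y' := y') hK (show 0 < 0 + 1 by omega)
  | succ q ih =>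
      obtain ⟨j, h1, h2⟩ := ih
      rcases lt_or_ge (q+1) (Sfun K y' (j+1)) with h | h
      · exact ⟨j, by omega, h⟩
      · have hq : Sfun K y' (j+1) = q + 1 := by omega
        have h3 := Sfun_strict (y' := y') hK (show j+1 < j+1+1 by omega)
        exact ⟨j+1, by omega, by omega⟩

end Sfun

section Rel
variable {K : ℕ} {y' y : ℕ → Fin 3} (hK : 1 ≤ K) (hR : Rel K y' y)
include hK hR

/-- nonzero positions of `y` are exactly the block starts -/
lemma nonzero_iff (q : ℕ) : y q ≠ 0 ↔ ∃ j, Sfun K y' j = q := by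
  constructor
  · intro hq
    obtain ⟨j, hj1, hj2⟩ := exists_block (y' := y') hK q
    refine ⟨j, ?_⟩
    by_contra hne
    have ht1 : 1 ≤ q - Sfun K y' j := by omega
    have hSj : Sfun K y' (j+1) = Sfun K y' j + blen K (y' j) := rfl
    have ht2 : q - Sfun K y' j < blen K (y' j) := by omega
    have := hR j (q - Sfun K y' j) ht2
    rw [show Sfun K y' j + (q - Sfun K y' j) = q by omega] at this
    exact hq (this.trans (chiSub_getD_pos K (y' j) _ ht1 ht2))
  · rintro ⟨j, rfl⟩
    have := hR j 0 (blen_pos K hK (y' j))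
    rw [add_zero] at this
    rw [this]
    exact chiSub_getD_zero K (y' j)

/-- any window of length `K+1` contains a nonzero letter -/
lemma run_bound (q : ℕ) : ∃ t ≤ K, y (q + t) ≠ 0 := by
  rcases eq_or_ne (y q) 0 with h0 | h0
  · obtain ⟨j, hj1, hj2⟩ := exists_block (y' := y') hK q
    have hne : Sfun K y' j ≠ q := by
      intro he
      have := (nonzero_iff hK hR q).mpr ⟨j, he⟩
      exact this h0
    have hlt : Sfun K y' j < q := by omega
    have hgap : Sfun K y' (j+1) ≤ Sfun K y' j + (K+1) := by
      have hSj : Sfun K y' (j+1) = Sfun K y' j + blen K (y' j) := rfl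
      have := blen_le K (y' j)
      omega
    refine ⟨Sfun K y' (j+1) - q, by omega, ?_⟩
    rw [show q + (Sfun K y' (j+1) - q) = Sfun K y' (j+1) by omega]
    exact (nonzero_iff hK hR _).mpr ⟨j+1, rfl⟩
  · exact ⟨0, by omega, by simpa using h0⟩

end Rel

/-- a `p`-periodic window of length `L` starting at `n` -/
def PerSeg (y : ℕ → Fin 3) (n L p : ℕ) : Prop :=
  ∀ i, i + p < L → y (n + i + p) = y (n + i)

/-- arbitrarily long `p`-periodic windows -/
def Qy (y : ℕ → Fin 3) (p : ℕ) : Prop := ∀ L, ∃ n, PerSeg y n L p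

lemma PerSeg.mono {y n L L' p} (h : PerSeg y n L p) (hL : L' ≤ L) : PerSeg y n L' p :=
  fun i hi => h i (by omega)

/-- ### main desubstitution lemma -/
lemma desub {K p : ℕ} {y' y : ℕ → Fin 3} (hK : 1 ≤ K) (hp : 1 ≤ p)
    (hR : Rel K y' y) (L' : ℕ) {n : ℕ}
    (hPer : PerSeg y n ((K+1) * (L' + p + 2) + (p + K + 2)) p) :
    ∃ p' n', 1 ≤ p' ∧ p' ≤ p ∧ PerSeg y' n' L' p' ∧
      (2 ≤ K → p' = p → ∀ i < L', y' (n' + i) = 0) := by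
  set L : ℕ := (K+1) * (L' + p + 2) + (p + K + 2) with hLdef
  -- propagation of letters and of nonzeroness across one period, inside the window
  have hprop : ∀ q, n ≤ q → q + p < n + L → y (q + p) = y q := by
    intro q h1 h2
    have := hPer (q - n) (by omega)
    rw [show n + (q - n) + p = q + p by omega, show n + (q - n) = q by omega] at this
    exact this
  -- a block start s0 = Sfun j0 within [n, n+K]
  obtain ⟨t0, ht0K, ht0⟩ := run_bound hK hR n
  obtain ⟨j0, hj0⟩ := (nonzero_iff hK hR (n + t0)).mp ht0
  -- window bound for all block starts we shall use
  have hwin : ∀ r, r ≤ L' + 1 → Sfun K y' (j0 + r) + p < n + L := by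
    intro r hr
    have h1 := Sfun_gap_le (y' := y') hK j0 r
    have h2 : (K+1)*r ≤ (K+1)*(L' + p + 2) := Nat.mul_le_mul_left _ (by omega)
    omega
  have hwin0 : Sfun K y' j0 + p < n + L := by
    have := hwin 0 (by omega); simpa using this
  have hs0n : n ≤ Sfun K y' j0 := by omega
  -- the start one period later
  have hs0p : y (Sfun K y' j0 + p) ≠ 0 := by
    rw [hprop _ hs0n hwin0, hj0]; exact ht0
  obtain ⟨j1, hj1⟩ := (nonzero_iff hK hR _).mp hs0p
  have hj0j1 : j0 < j1 := by
    apply Sfun_lt_imp (y' := y') hK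
    rw [hj1]; omega
  set p' : ℕ := j1 - j0 with hp'def
  have hp'1 : 1 ≤ p' := by omega
  have hB0 : Sfun K y' (j0 + p') = Sfun K y' j0 + p := by
    rw [show j0 + p' = j1 by omega, hj1]
  have hp'p : p' ≤ p := by
    have := Sfun_add_le (y' := y') hK j0 p'
    omega
  -- the block-start structure is p-periodic in the window
  have hB : ∀ r, r ≤ L' → Sfun K y' (j0 + r + p') = Sfun K y' (j0 + r) + p := by
    intro r hr
    induction r with
    | zero => simpa using hB0
    | succ r IH =>
        have IH' := IH (by omega)
        -- upper bound
        have hne1 : y (Sfun K y' (j0 + r + 1)) ≠ 0 := (nonzero_iff hK hR _).mpr ⟨_, rfl⟩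
        have hb1 : n ≤ Sfun K y' (j0 + r + 1) := by
          have := Sfun_le (y' := y') hK (show j0 ≤ j0 + r + 1 by omega); omega
        have hb2 : Sfun K y' (j0 + r + 1) + p < n + L := by
          have := hwin (r+1) (by omega)
          rw [show j0 + (r+1) = j0 + r + 1 by omega] at this
          exact this
        have hne2 : y (Sfun K y' (j0 + r + 1) + p) ≠ 0 := by
          rw [hprop _ hb1 hb2]; exact hne1
        obtain ⟨j2, hj2⟩ := (nonzero_iff hK hR _).mp hne2
        have hlt2 : j0 + r + p' < j2 := by
          apply Sfun_lt_imp (y' := y') hK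
          rw [hj2, IH']
          exact Nat.add_lt_add_right (Sfun_strict (y' := y') hK (by omega)) p
        have hup : Sfun K y' (j0 + r + p' + 1) ≤ Sfun K y' (j0 + r + 1) + p := by
          calc Sfun K y' (j0 + r + p' + 1) ≤ Sfun K y' j2 := Sfun_le (y' := y') hK (by omega)
          _ = _ := hj2
        -- lower bound
        set A : ℕ := Sfun K y' (j0 + r + p' + 1) with hAdef
        have hAgt : Sfun K y' (j0 + r) + p < A := by
          have := Sfun_strict (y' := y') hK (show j0 + r + p' < j0 + r + p' + 1 by omega)
          omega
        have hAne : y A ≠ 0 := (nonzero_iff hK hR _).mpr ⟨_, rfl⟩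
        have hbr : n ≤ Sfun K y' (j0 + r) := by
          have := Sfun_le (y' := y') hK (show j0 ≤ j0 + r by omega); omega
        have hAmn : n ≤ A - p := by omega
        have hAmw : (A - p) + p < n + L := by omega
        have hAm : y (A - p) ≠ 0 := by
          have := hprop _ hAmn hAmw
          rw [show A - p + p = A by omega] at this
          rw [this] at hAne
          exact hAne
        obtain ⟨j3, hj3⟩ := (nonzero_iff hK hR _).mp hAm
        have hlt3 : j0 + r < j3 := by
          apply Sfun_lt_imp (y' := y') hK
          rw [hj3]; omega
        have hlow : Sfun K y' (j0 + r + 1) ≤ A - p :=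
          hj3 ▸ Sfun_le (y' := y') hK (by omega)
        have : A = Sfun K y' (j0 + r + 1) + p := by omega
        rw [show j0 + (r+1) + p' = j0 + r + p' + 1 by omega,
            show j0 + (r+1) = j0 + r + 1 by omega]
        exact this
  -- letters are p'-periodic at the lower level
  have hhead : ∀ j, y (Sfun K y' j) = (chiSub K (y' j)).getD 0 0 := by
    intro j
    have := hR j 0 (blen_pos K hK (y' j))
    rwa [add_zero] at this
  have hlet : PerSeg y' j0 L' p' := by
    intro i hi
    have hBi := hB i (by omega)
    have hBi1 := hB (i+1) (by omega)
    rw [show j0 + (i+1) + p' = j0 + i + p' + 1 by omega,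
        show j0 + (i+1) = j0 + i + 1 by omega] at hBi1
    have hbi : n ≤ Sfun K y' (j0 + i) := by
      have := Sfun_le (y' := y') hK (show j0 ≤ j0 + i by omega); omega
    have hbw : Sfun K y' (j0 + i) + p < n + L := by
      have := hwin i (by omega); exact this
    have hheads : (chiSub K (y' (j0 + i + p'))).getD 0 0
        = (chiSub K (y' (j0 + i))).getD 0 0 := by
      rw [← hhead, ← hhead, hBi, hprop _ hbi hbw]
    have hblens : blen K (y' (j0 + i + p')) = blen K (y' (j0 + i)) := by
      have e1 := Sfun_succ K y' (j0 + i + p')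
      have e2 := Sfun_succ K y' (j0 + i)
      omega
    exact recover_letter K hK _ _ hheads hblens
  refine ⟨p', j0, hp'1, hp'p, hlet, ?_⟩
  -- if p' = p (and K ≥ 2) the whole lower window is zero
  intro hK2 hpe
  have hflat : ∀ r, r < p' → y' (j0 + r) = 0 := by
    intro r hrp
    have l1 := Sfun_add_le (y' := y') hK j0 r
    have l2 := Sfun_add_le (y' := y') hK (j0 + r) (p' - r)
    rw [show j0 + r + (p' - r) = j0 + p' by omega] at l2
    have l3 := Sfun_add_le (y' := y') hK j0 (r+1)
    rw [show j0 + (r+1) = j0 + r + 1 by omega] at l3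
    have l4 := Sfun_add_le (y' := y') hK (j0 + r + 1) (p' - r - 1)
    rw [show j0 + r + 1 + (p' - r - 1) = j0 + p' by omega] at l4
    have e1 := Sfun_succ K y' (j0 + r)
    have hone : blen K (y' (j0 + r)) = 1 := by omega
    exact blen_eq_one hK2 hone
  intro i hi
  induction i using Nat.strong_induction_on with
  | _ i IH =>
    rcases lt_or_ge i p' with h | h
    · exact hflat i h
    · have hlet' := hlet (i - p') (by omega)
      rw [show j0 + (i - p') + p' = j0 + i by omega] at hlet'
      rw [hlet']
      exact IH (i - p') (by omega) (by omega)

/-- infinite pigeonhole -/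
lemma freq_fiber {p : ℕ} (h : ℕ → ℕ) (hb : ∀ i, h i ≤ p) :
    ∃ v ≤ p, ∀ N, ∃ i ≥ N, h i = v := by
  obtain ⟨v, hv⟩ := Finite.exists_infinite_fiber
    (fun i => (⟨h i, by have := hb i; omega⟩ : Fin (p+1)))
  have hinf : ((fun i => (⟨h i, by have := hb i; omega⟩ : Fin (p+1))) ⁻¹' {v}).Infinite :=
    Set.infinite_coe_iff.mp hv
  refine ⟨v.1, by omega, fun N => ?_⟩
  obtain ⟨i, hi, hNi⟩ := hinf.exists_gt N
  refine ⟨i, by omega, ?_⟩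
  have : (⟨h i, by have := hb i; omega⟩ : Fin (p+1)) = v := hi
  exact congrArg Fin.val this

/-- pigeonhole transport of `Qy` across one level -/
lemma transport {K p : ℕ} {y' y : ℕ → Fin 3} (hK : 1 ≤ K) (hp : 1 ≤ p)
    (hR : Rel K y' y) (hQ : Qy y p) :
    ∃ p', 1 ≤ p' ∧ p' ≤ p ∧ Qy y' p' ∧
      (2 ≤ K → p' = p → ∀ L, ∃ n, ∀ i < L, y' (n + i) = 0) := by
  have H : ∀ L', ∃ p' n', 1 ≤ p' ∧ p' ≤ p ∧ PerSeg y' n' L' p' ∧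
      (2 ≤ K → p' = p → ∀ i < L', y' (n' + i) = 0) := by
    intro L'
    obtain ⟨n, hPer⟩ := hQ ((K+1) * (L' + p + 2) + (p + K + 2))
    exact desub hK hp hR L' hPer
  choose f g h1 h2 h3 h4 using H
  obtain ⟨v, hv⟩ := freq_fiber f h2
  obtain ⟨vp, hvfreq⟩ := hv
  have hv1 : 1 ≤ v := by
    obtain ⟨i, _, hiv⟩ := hvfreq 0
    have := h1 i; omega
  refine ⟨v, hv1, vp, ?_, ?_⟩
  · intro L
    obtain ⟨i, hiL, hiv⟩ := hvfreq L
    refine ⟨g i, ?_⟩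
    have := (h3 i).mono hiL
    rwa [hiv] at this
  · intro hK2 hvp L
    obtain ⟨i, hiL, hiv⟩ := hvfreq L
    refine ⟨g i, fun j hj => h4 i hK2 (by omega) j (by omega)⟩

/-! ### the tower of sequences -/

section Tower
variable (k : ℕ → ℕ)

/-- shifted directive sequence -/
def ksh (n : ℕ) : ℕ → ℕ := fun i => k (i + n)

/-- the words `χ_{k_{n+1}} ∘ ⋯ ∘ χ_{k_{n+m}} (3)` -/
def T (n m : ℕ) : List (Fin 3) := compApply (ksh k n) m [2]

lemma getD_of_prefix {u v : List (Fin 3)} (h : u <+: v) {i : ℕ} (hi : i < u.length) :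
    u.getD i 0 = v.getD i 0 := by
  rw [List.getD_eq_getElem _ _ hi, List.getD_eq_getElem _ _ (lt_of_lt_of_le hi h.length_le)]
  exact h.getElem hi

lemma applyChi_append (K : ℕ) (u v : List (Fin 3)) :
    applyChi K (u ++ v) = applyChi K u ++ applyChi K v := List.flatMap_append

lemma compApply_append (m : ℕ) (u v : List (Fin 3)) :
    compApply k m (u ++ v) = compApply k m u ++ compApply k m v := by
  induction m generalizing u v with
  | zero => rfl
  | succ m ih =>
      show compApply k m (applyChi (k (m+1)) (u ++ v)) = _
      rw [applyChi_append, ih]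
      rfl

lemma chiSub_length_pos (K : ℕ) (a : Fin 3) : 1 ≤ (chiSub K a).length := by
  fin_cases a <;> simp [chiSub]

lemma length_applyChi_ge (K : ℕ) (w : List (Fin 3)) : w.length ≤ (applyChi K w).length := by
  induction w with
  | nil => simp [applyChi]
  | cons a w ih =>
      rw [show applyChi K (a :: w) = chiSub K a ++ applyChi K w from List.flatMap_cons .. ]
      simp only [List.length_append, List.length_cons]
      have := chiSub_length_pos K a
      omega

lemma length_compApply_ge (m : ℕ) (w : List (Fin 3)) :
    w.length ≤ (compApply k m w).length := by
  induction m generalizing w with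
  | zero => exact le_refl _
  | succ m ih =>
      calc w.length ≤ (applyChi (k (m+1)) w).length := length_applyChi_ge _ _
      _ ≤ _ := ih _

lemma applyChi_three (K : ℕ) :
    applyChi K [2] = [2] ++ List.replicate (K - 1) (0 : Fin 3) := by
  simp [applyChi, chiSub]

lemma T_succ (n m : ℕ) : T k n (m + 1)
    = T k n m ++ compApply (ksh k n) m (List.replicate (k (m + 1 + n) - 1) 0) := by
  show compApply (ksh k n) m (applyChi (ksh k n (m+1)) [2]) = _
  rw [show ksh k n (m+1) = k (m+1+n) from rfl, applyChi_three, compApply_append]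
  rfl

lemma T_prefix (n : ℕ) {m m' : ℕ} (h : m ≤ m') : T k n m <+: T k n m' := by
  induction m' with
  | zero =>
      rw [Nat.le_zero.mp h]
  | succ m' ih =>
      rcases Nat.lt_or_ge m (m'+1) with h2 | h2
      · refine (ih (by omega)).trans ?_
        rw [T_succ]
        exact List.prefix_append _ _
      · rw [show m = m' + 1 by omega]

lemma T_len_mono (n : ℕ) {m m' : ℕ} (h : m ≤ m') :
    (T k n m).length ≤ (T k n m').length :=
  (T_prefix k n h).length_le

variable (hstar : StarCond k)
include hstar

lemma T_len_unbounded (n : ℕ) : ∀ L, ∃ m, L < (T k n m).length := by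
  intro L
  induction L with
  | zero => exact ⟨0, by simp [T, compApply]⟩
  | succ L ih =>
      obtain ⟨m, hm⟩ := ih
      obtain ⟨i, hiN, hik⟩ := hstar.1 (m + n + 1)
      set j := 2 * i with hj
      have hj1 : m + n + 1 ≤ j := by omega
      set m' := j - n - 1 with hm'
      have hmm' : m ≤ m' := by omega
      have hjm' : m' + 1 + n = j := by omega
      refine ⟨m' + 1, ?_⟩
      rw [T_succ, List.length_append, hjm']
      have h1 := length_compApply_ge (ksh k n) m' (List.replicate (k j - 1) (0 : Fin 3))
      rw [List.length_replicate] at h1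
      have h2 := T_len_mono k n hmm'
      omega

/-- the level-`n` limit sequence -/
noncomputable def rhoHat (n i : ℕ) : Fin 3 :=
  (T k n (Nat.find (T_len_unbounded k hstar n i))).getD i 0

lemma rhoHat_compat (n m i : ℕ) (h : i < (T k n m).length) :
    (T k n m).getD i 0 = rhoHat k hstar n i := by
  unfold rhoHat
  set m2 := Nat.find (T_len_unbounded k hstar n i) with hm2
  have h2 : i < (T k n m2).length := Nat.find_spec (T_len_unbounded k hstar n i)
  rcases le_total m m2 with hle | hle
  · exact getD_of_prefix (T_prefix k n hle) h
  · exact (getD_of_prefix (T_prefix k n hle) h2).symm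

omit hstar in
lemma getD_append_offset (A X : List (Fin 3)) (t : ℕ) (ht : t < X.length) :
    (A ++ X).getD (A.length + t) 0 = X.getD t 0 := by
  rw [List.getD_eq_getElem _ _ (by simp; omega), List.getD_eq_getElem _ _ ht,
      List.getElem_append_right (by omega)]
  congr 1
  omega

omit hstar in
lemma length_applyChi_sum (K : ℕ) (w : List (Fin 3)) :
    (applyChi K w).length = (w.map (blen K)).sum := by
  rw [applyChi, List.length_flatMap]
  rfl

omit hstar in
lemma compApply_step (n m : ℕ) (w : List (Fin 3)) :
    compApply (ksh k n) (m + 1) w = applyChi (k (n + 1)) (compApply (ksh k (n + 1)) m w) := by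
  induction m generalizing w with
  | zero =>
      show applyChi (ksh k n 1) w = applyChi (k (n+1)) w
      rw [show ksh k n 1 = k (n + 1) from congrArg k (by omega)]
  | succ m ih =>
      have e : ksh k n (m+2) = ksh k (n+1) (m+1) := congrArg k (by omega)
      show compApply (ksh k n) (m+1) (applyChi (ksh k n (m+2)) w) = _
      rw [ih, e]
      rfl

omit hstar in
lemma T_img (n m : ℕ) : T k n (m + 1) = applyChi (k (n + 1)) (T k (n + 1) m) :=
  compApply_step k n m [2]

omit hstar in
/-- `Sfun` computed from a finite approximation -/
lemma Sfun_from_list (K : ℕ) (y' : ℕ → Fin 3) (u' : List (Fin 3))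
    (hc : ∀ i, (h : i < u'.length) → u'.getD i 0 = y' i) :
    ∀ j, j ≤ u'.length → Sfun K y' j = (applyChi K (u'.take j)).length := by
  intro j
  induction j with
  | zero => intro _; simp [Sfun, applyChi]
  | succ j ih =>
      intro hj
      have hjl : j < u'.length := by omega
      have htake : u'.take (j+1) = u'.take j ++ [u'[j]] := by
        rw [List.take_succ]
        simp [List.getElem?_eq_getElem hjl]
      rw [htake, applyChi_append, List.length_append, ← ih (by omega)]
      have : (applyChi K [u'[j]]).length = blen K (y' j) := by
        have hu : u'[j] = y' j := by
          rw [← hc j hjl, List.getD_eq_getElem _ _ hjl]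
        rw [show applyChi K [u'[j]] = chiSub K u'[j] ++ [] from List.flatMap_cons .. ]
        simp [hu, blen]
      rw [this]
      rfl

/-- existence of the `Rel` between consecutive levels of the tower -/
lemma rhoHat_rel (n : ℕ) :
    Rel (k (n + 1)) (rhoHat k hstar (n + 1)) (rhoHat k hstar n) := by
  set K := k (n + 1) with hKdef
  set y' := rhoHat k hstar (n + 1) with hy'def
  intro j t ht
  obtain ⟨m, hm⟩ := T_len_unbounded k hstar (n+1) j
  set u' := T k (n+1) m with hu'def
  have hc : ∀ i, (h : i < u'.length) → u'.getD i 0 = y' i :=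
    fun i h => rhoHat_compat k hstar (n+1) m i h
  have hu'j : u'.getD j 0 = y' j := hc j hm
  have hSf : Sfun K y' j = (applyChi K (u'.take j)).length :=
    Sfun_from_list K y' u' hc j (by omega)
  -- decompose the image
  have hdecomp : applyChi K u'
      = applyChi K (u'.take j) ++ (chiSub K (y' j) ++ applyChi K (u'.drop (j+1))) := by
    conv_lhs => rw [← List.take_append_drop j u', List.drop_eq_getElem_cons hm]
    rw [applyChi_append]
    congr 1
    rw [show applyChi K (u'[j] :: u'.drop (j+1))
        = chiSub K u'[j] ++ applyChi K (u'.drop (j+1)) from List.flatMap_cons .. ]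
    congr 2
    rw [← hu'j, List.getD_eq_getElem _ _ hm]
  have htlen : t < (chiSub K (y' j)).length := ht
  -- the position sits inside T k n (m+1)
  have hq : Sfun K y' j + t < (T k n (m+1)).length := by
    rw [T_img, hdecomp]
    simp only [List.length_append, hSf]
    omega
  rw [← rhoHat_compat k hstar n (m+1) _ hq, T_img, hdecomp, hSf,
      getD_append_offset _ _ t (by simp only [List.length_append]; omega)]
  rw [List.getD_eq_getElem _ _ (by simp; omega), List.getD_eq_getElem _ _ htlen,
      List.getElem_append_left htlen]

/-- the base of the tower is `ρ` -/
lemma rhoHat_zero (ρ : ℕ → Fin 3) (hρ : ∀ n : ℕ, IsPrefixSeq (compApply k n [2]) ρ) :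
    rhoHat k hstar 0 = ρ := by
  funext i
  obtain ⟨m, hm⟩ := T_len_unbounded k hstar 0 i
  have hT : T k 0 m = compApply k m [2] := rfl
  have h1 : (T k 0 m).getD i 0 = rhoHat k hstar 0 i := rhoHat_compat k hstar 0 m i hm
  have h2 : (compApply k m [2]).getD i 0 = ρ i := by
    have hw := hρ m
    unfold IsPrefixSeq at hw
    have hm' : i < (compApply k m [2]).length := by rw [← hT]; exact hm
    rw [List.getD_eq_getElem _ _ hm', List.getElem_of_eq hw hm', List.getElem_ofFn]
  rw [← h1, hT, h2]

variable (hpos : ∀ i, 1 ≤ i → 1 ≤ k i)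
include hpos

/-- the main descent: no level of the tower has arbitrarily long periodic windows -/
lemma noQy : ∀ p, 1 ≤ p → ∀ n, ¬ Qy (rhoHat k hstar n) p := by
  intro p
  induction p using Nat.strong_induction_on with
  | _ p IH =>
    intro hp n hQ
    have walk : ∀ d, ∃ p', 1 ≤ p' ∧ p' ≤ p ∧ Qy (rhoHat k hstar (n + d)) p' := by
      intro d
      induction d with
      | zero => exact ⟨p, hp, le_refl p, hQ⟩
      | succ d ih =>
          obtain ⟨p', h1, h2, hQ'⟩ := ih
          have hK1 : 1 ≤ k (n + d + 1) := hpos _ (by omega)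
          obtain ⟨p'', g1, g2, g3, _⟩ := transport hK1 h1 (rhoHat_rel k hstar (n + d)) hQ'
          exact ⟨p'', g1, by omega, by rw [show n + (d+1) = n + d + 1 by omega]; exact g3⟩
    obtain ⟨i, hiN, hik⟩ := hstar.1 (n + 1)
    set n₂ := 2 * i - 1 with hn₂def
    have hn₂ : n ≤ n₂ := by omega
    have hk2 : 2 ≤ k (n₂ + 1) := by rw [show n₂ + 1 = 2 * i by omega]; omega
    obtain ⟨p₂, h1, h2, hQ₂⟩ := walk (n₂ - n)
    rw [show n + (n₂ - n) = n₂ by omega] at hQ₂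
    rcases Nat.lt_or_ge p₂ p with hlt | hge
    · exact IH p₂ hlt h1 n₂ hQ₂
    · have hpe : p₂ = p := by omega
      obtain ⟨p₃, g1, g2, g3, g4⟩ := transport (by omega : 1 ≤ k (n₂ + 1)) h1
        (rhoHat_rel k hstar n₂) hQ₂
      rcases Nat.lt_or_ge p₃ p with hlt3 | hge3
      · exact IH p₃ hlt3 g1 (n₂ + 1) g3
      · have hpe3 : p₃ = p₂ := by omega
        have hz := g4 hk2 hpe3
        obtain ⟨n0, hn0⟩ := hz (k (n₂ + 2) + 1)
        have hK'' : 1 ≤ k (n₂ + 2) := hpos _ (by omega)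
        obtain ⟨t, htK, htne⟩ := run_bound hK'' (rhoHat_rel k hstar (n₂ + 1)) n0
        exact htne (hn0 t (by omega))

end Tower

/-- iterates of the shift -/
lemma shift_iterate (p : ℕ) : ∀ x : ℕ → Fin 3, shift^[p] x = fun i => x (i + p) := by
  induction p with
  | zero => intro x; rfl
  | succ p ih =>
      intro x
      rw [Function.iterate_succ_apply, ih (shift x)]
      funext i
      show x (i + p + 1) = x (i + (p + 1))
      rw [Nat.add_assoc]

end Aperiodic

theorem statement1 (k : ℕ → ℕ) (hpos : ∀ i, 1 ≤ i → 1 ≤ k i) (hstar : StarCond k)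
    (ρ : ℕ → Fin 3) (hρ : ∀ n : ℕ, IsPrefixSeq (compApply k n [2]) ρ) :
    ∀ x ∈ orbitClosure ρ, ∀ p : ℕ, 1 ≤ p → shift^[p] x ≠ x := by
  intro x hx p hp hper
  have hxp : ∀ i, x (i + p) = x i := by
    intro i
    have h := congrFun hper i
    rwa [Aperiodic.shift_iterate p x] at h
  have hx' : x ∈ closure {y : ℕ → Fin 3 | ∃ n : ℕ, y = fun i => ρ (i + n)} := hx
  have hQ : Aperiodic.Qy ρ p := by
    intro L
    have hUopen : IsOpen {z : ℕ → Fin 3 | ∀ i < L, z i = x i} := by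
      have he : {z : ℕ → Fin 3 | ∀ i < L, z i = x i}
          = ⋂ (i : Fin L), (fun z : ℕ → Fin 3 => z i.1) ⁻¹' {x i.1} := by
        ext z
        simp only [Set.mem_setOf_eq, Set.mem_iInter, Set.mem_preimage, Set.mem_singleton_iff]
        exact ⟨fun h i => h i.1 i.2, fun h i hi => h ⟨i, hi⟩⟩
      rw [he]
      exact isOpen_iInter_of_finite fun i =>
        (continuous_apply (i : ℕ)).isOpen_preimage _ (isOpen_discrete _)
    obtain ⟨z, hz1, hz2⟩ := mem_closure_iff.mp hx' _ hUopen (fun i _ => rfl)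
    obtain ⟨n, rfl⟩ := hz2
    refine ⟨n, fun i hi => ?_⟩
    have e1 : ρ ((i + p) + n) = x (i + p) := hz1 (i + p) (by omega)
    have e2 : ρ (i + n) = x i := hz1 i (by omega)
    rw [show n + i + p = i + p + n from by omega, show n + i = i + n from by omega,
        e1, e2, hxp i]
  have h0 : Aperiodic.Qy (Aperiodic.rhoHat k hstar 0) p := by
    rw [Aperiodic.rhoHat_zero k hstar ρ hρ]
    exact hQ
  exact Aperiodic.noQy k hstar hpos p hp 0 h0
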